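/- The function f(r) = 2E(r) − (1−r²)K(r) is strictly increasing on (0,1), from π/2 (as r → 0⁺) onto 2 (as r → 1⁻). -/

import Mathlib

open Real Set Filter Topology

/-- Complete elliptic integral of the first kind. -/
noncomputable def ellK (r : ℝ) : ℝ :=
  ∫ θ in (0:ℝ)..(π / 2), 1 / Real.sqrt (1 - r ^ 2 * Real.sin θ ^ 2)

/-- Complete elliptic integral of the second kind. -/
noncomputable def ellE (r : ℝ) : ℝ :=
  ∫ θ in (0:ℝ)..(π / 2), Real.sqrt (1 - r ^ 2 * Real.sin θ ^ 2)

open MeasureTheory intervalIntegral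

noncomputable def gg (r θ : ℝ) : ℝ :=
  (1 + r ^ 2 - 2 * r ^ 2 * Real.sin θ ^ 2) / Real.sqrt (1 - r ^ 2 * Real.sin θ ^ 2)

noncomputable def gg' (r θ : ℝ) : ℝ :=
  r * (2 - 3 * Real.sin θ ^ 2 - r ^ 2 * Real.sin θ ^ 2 + 2 * r ^ 2 * Real.sin θ ^ 4) /
    Real.sqrt (1 - r ^ 2 * Real.sin θ ^ 2) ^ 3

lemma X_pos {r : ℝ} (hr : |r| < 1) (θ : ℝ) : 0 < 1 - r ^ 2 * Real.sin θ ^ 2 := by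
  have h1 : r ^ 2 < 1 := by nlinarith [sq_abs r, abs_nonneg r]
  nlinarith [Real.sin_sq_le_one θ, sq_nonneg r, sq_nonneg (Real.sin θ)]

lemma hasDerivAt_gg {r : ℝ} (hr : |r| < 1) (θ : ℝ) :
    HasDerivAt (fun r => gg r θ) (gg' r θ) r := by
  have hX := X_pos hr θ
  set s := Real.sin θ ^ 2 with hs
  have hXne : (1 : ℝ) - r ^ 2 * s ≠ 0 := ne_of_gt hX
  have hinner : HasDerivAt (fun r : ℝ => 1 - r ^ 2 * s) (-(2 * r * s)) r := by
    simpa using (((hasDerivAt_pow 2 r).mul_const s).const_sub 1)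
  have hsqrt : HasDerivAt (fun r : ℝ => Real.sqrt (1 - r ^ 2 * s))
      (-(2 * r * s) / (2 * Real.sqrt (1 - r ^ 2 * s))) r := hinner.sqrt hXne
  have hu : 0 < Real.sqrt (1 - r ^ 2 * s) := Real.sqrt_pos.mpr hX
  have hune : Real.sqrt (1 - r ^ 2 * s) ≠ 0 := ne_of_gt hu
  have hnum : HasDerivAt (fun r : ℝ => 1 + r ^ 2 - 2 * r ^ 2 * s) (2 * r - 2 * (2 * r) * s) r := by
    have : HasDerivAt (fun r : ℝ => 1 + r ^ 2 - 2 * r ^ 2 * s) _ r := (((hasDerivAt_pow 2 r).const_add 1).sub (((hasDerivAt_pow 2 r).const_mul 2).mul_const s))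
    convert this using 1 <;> ring
  have hdiv : HasDerivAt (fun r => gg r θ) _ r := hnum.div hsqrt hune
  convert hdiv using 1
  simp only [gg', ← hs]
  have h2 : Real.sqrt (1 - r ^ 2 * s) ^ 2 = 1 - r ^ 2 * s := Real.sq_sqrt hX.le
  field_simp
  linear_combination (-2 * r * (1 - 2 * s)) * h2 - 2 * r ^ 3 * (Real.sin θ ^ 2 + s) * hs

lemma cont_u {r : ℝ} : Continuous fun θ : ℝ => Real.sqrt (1 - r ^ 2 * Real.sin θ ^ 2) := by
  fun_prop

lemma hasDerivAt_w {r : ℝ} (hr : |r| < 1) (θ : ℝ) :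
    HasDerivAt (fun θ => Real.sin θ * Real.cos θ / Real.sqrt (1 - r ^ 2 * Real.sin θ ^ 2))
      ((Real.cos θ ^ 2 - Real.sin θ ^ 2) / Real.sqrt (1 - r ^ 2 * Real.sin θ ^ 2) +
        r ^ 2 * Real.sin θ ^ 2 * Real.cos θ ^ 2 / Real.sqrt (1 - r ^ 2 * Real.sin θ ^ 2) ^ 3) θ := by
  have hX := X_pos hr θ
  have hu : 0 < Real.sqrt (1 - r ^ 2 * Real.sin θ ^ 2) := Real.sqrt_pos.mpr hX
  have hune := ne_of_gt hu
  have hXne := ne_of_gt hX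
  have hnum : HasDerivAt (fun θ => Real.sin θ * Real.cos θ)
      (Real.cos θ * Real.cos θ + Real.sin θ * -Real.sin θ) θ :=
    (Real.hasDerivAt_sin θ).mul (Real.hasDerivAt_cos θ)
  have hinner : HasDerivAt (fun θ : ℝ => 1 - r ^ 2 * Real.sin θ ^ 2)
      (-(r ^ 2 * (2 * Real.sin θ ^ 1 * Real.cos θ))) θ := by
    simpa using (((Real.hasDerivAt_sin θ).pow 2).const_mul (r ^ 2)).const_sub 1
  have hsqrt := hinner.sqrt hXne
  have hdiv : HasDerivAt (fun θ => Real.sin θ * Real.cos θ / Real.sqrt (1 - r ^ 2 * Real.sin θ ^ 2)) _ θ :=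
    hnum.div hsqrt hune
  convert hdiv using 1
  have h2 : Real.sqrt (1 - r ^ 2 * Real.sin θ ^ 2) ^ 2 = 1 - r ^ 2 * Real.sin θ ^ 2 :=
    Real.sq_sqrt hX.le
  field_simp
  set u := Real.sqrt (1 - r ^ 2 * Real.sin θ ^ 2) with hudef
  set S := Real.sin θ ^ 2 with hS
  set C := Real.cos θ ^ 2 with hC
  set X := (1:ℝ) - r ^ 2 * S with hXdef
  ring

lemma cont_div_u {r : ℝ} (hr : |r| < 1) :
    Continuous fun θ : ℝ => Real.cos θ ^ 2 / Real.sqrt (1 - r ^ 2 * Real.sin θ ^ 2) := by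
  apply Continuous.div (by fun_prop) cont_u
  exact fun θ => ne_of_gt (Real.sqrt_pos.mpr (X_pos hr θ))

lemma cont_gg' {r : ℝ} (hr : |r| < 1) : Continuous fun θ : ℝ => gg' r θ := by
  unfold gg'
  apply Continuous.div (by fun_prop) (by fun_prop)
  exact fun θ => pow_ne_zero _ (ne_of_gt (Real.sqrt_pos.mpr (X_pos hr θ)))

lemma cont_W {r : ℝ} (hr : |r| < 1) :
    Continuous fun θ : ℝ => (Real.cos θ ^ 2 - Real.sin θ ^ 2) / Real.sqrt (1 - r ^ 2 * Real.sin θ ^ 2) +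
      r ^ 2 * Real.sin θ ^ 2 * Real.cos θ ^ 2 / Real.sqrt (1 - r ^ 2 * Real.sin θ ^ 2) ^ 3 := by
  apply Continuous.add
  · apply Continuous.div (by fun_prop) cont_u
    exact fun θ => ne_of_gt (Real.sqrt_pos.mpr (X_pos hr θ))
  · apply Continuous.div (by fun_prop) (by fun_prop)
    exact fun θ => pow_ne_zero _ (ne_of_gt (Real.sqrt_pos.mpr (X_pos hr θ)))

lemma integral_W_eq_zero {r : ℝ} (hr : |r| < 1) :
    (∫ θ in (0:ℝ)..(π/2), ((Real.cos θ ^ 2 - Real.sin θ ^ 2) / Real.sqrt (1 - r ^ 2 * Real.sin θ ^ 2) +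
      r ^ 2 * Real.sin θ ^ 2 * Real.cos θ ^ 2 / Real.sqrt (1 - r ^ 2 * Real.sin θ ^ 2) ^ 3)) = 0 := by
  rw [intervalIntegral.integral_eq_sub_of_hasDerivAt (fun θ _ => hasDerivAt_w hr θ)
    ((cont_W hr).intervalIntegrable _ _)]
  simp

lemma integral_gg'_eq {r : ℝ} (hr : |r| < 1) :
    (∫ θ in (0:ℝ)..(π/2), gg' r θ) =
      r * ∫ θ in (0:ℝ)..(π/2), Real.cos θ ^ 2 / Real.sqrt (1 - r ^ 2 * Real.sin θ ^ 2) := by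
  have key : ∀ θ : ℝ, gg' r θ =
      r * ((Real.cos θ ^ 2 - Real.sin θ ^ 2) / Real.sqrt (1 - r ^ 2 * Real.sin θ ^ 2) +
        r ^ 2 * Real.sin θ ^ 2 * Real.cos θ ^ 2 / Real.sqrt (1 - r ^ 2 * Real.sin θ ^ 2) ^ 3) +
      r * (Real.cos θ ^ 2 / Real.sqrt (1 - r ^ 2 * Real.sin θ ^ 2)) := by
    intro θ
    have hX := X_pos hr θ
    have hu : 0 < Real.sqrt (1 - r ^ 2 * Real.sin θ ^ 2) := Real.sqrt_pos.mpr hX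
    have h2 : Real.sqrt (1 - r ^ 2 * Real.sin θ ^ 2) ^ 2 = 1 - r ^ 2 * Real.sin θ ^ 2 :=
      Real.sq_sqrt hX.le
    have hsc : Real.sin θ ^ 2 + Real.cos θ ^ 2 = 1 := Real.sin_sq_add_cos_sq θ
    set u := Real.sqrt (1 - r ^ 2 * Real.sin θ ^ 2) with hudef
    set S := Real.sin θ ^ 2 with hS
    set C := Real.cos θ ^ 2 with hC
    have hune : u ≠ 0 := ne_of_gt hu
    have hrhs : r * ((C - S) / u + r ^ 2 * S * C / u ^ 3) + r * (C / u) =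
        r * ((2 * C - S) * u ^ 2 + r ^ 2 * S * C) / u ^ 3 := by
      field_simp
      ring
    rw [gg', hrhs, h2]
    have hP : 2 - 3 * S - r ^ 2 * S + 2 * r ^ 2 * S ^ 2 =
        (2 * C - S) * (1 - r ^ 2 * S) + r ^ 2 * S * C := by
      linear_combination (r ^ 2 * S - 2) * hsc
    simp only [← hS, ← hudef]
    rw [show Real.sin θ ^ 4 = S ^ 2 from by rw [hS]; ring, hP]
  rw [intervalIntegral.integral_congr (g := fun θ => _) (fun θ _ => key θ)]
  rw [intervalIntegral.integral_add ((continuous_const.fun_mul (cont_W hr)).intervalIntegrable _ _)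
    ((continuous_const.fun_mul (cont_div_u hr)).intervalIntegrable _ _),
    intervalIntegral.integral_const_mul, intervalIntegral.integral_const_mul,
    integral_W_eq_zero hr]
  ring

lemma integral_cdivu_pos {r : ℝ} (hr : |r| < 1) :
    0 < ∫ θ in (0:ℝ)..(π/2), Real.cos θ ^ 2 / Real.sqrt (1 - r ^ 2 * Real.sin θ ^ 2) := by
  apply intervalIntegral.intervalIntegral_pos_of_pos_on ((cont_div_u hr).intervalIntegrable _ _)
  · intro x hx
    apply div_pos
    · have : 0 < Real.cos x := Real.cos_pos_of_mem_Ioo ⟨by linarith [hx.1, Real.pi_pos], hx.2⟩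
      positivity
    · exact Real.sqrt_pos.mpr (X_pos hr x)
  · linarith [Real.pi_pos]

noncomputable def GG (r : ℝ) : ℝ := ∫ θ in (0:ℝ)..(π/2), gg r θ

lemma cont_gg_theta {r : ℝ} (hr : |r| < 1) : Continuous fun θ : ℝ => gg r θ := by
  unfold gg
  exact Continuous.div (by fun_prop) cont_u
    (fun θ => ne_of_gt (Real.sqrt_pos.mpr (X_pos hr θ)))

lemma hasDerivAt_GG {r₀ : ℝ} (h0 : |r₀| < 1) :
    HasDerivAt GG (∫ θ in (0:ℝ)..(π/2), gg' r₀ θ) r₀ := by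
  set R : ℝ := (1 + |r₀|) / 2 with hRdef
  have hR1 : R < 1 := by simp only [hRdef]; linarith
  have hR0 : 0 < R := by simp only [hRdef]; linarith [abs_nonneg r₀]
  have hRsq : R ^ 2 < 1 := by nlinarith
  set ε : ℝ := (1 - |r₀|) / 2 with hεdef
  have hε : 0 < ε := by simp only [hεdef]; linarith
  have hball : ∀ x ∈ Metric.ball r₀ ε, |x| < R := by
    intro x hx
    have := abs_sub_abs_le_abs_sub x r₀
    rw [Metric.mem_ball, Real.dist_eq] at hx
    simp only [hRdef]; linarith
  have hm : 0 < Real.sqrt (1 - R ^ 2) := Real.sqrt_pos.mpr (by linarith)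
  have main := intervalIntegral.hasDerivAt_integral_of_dominated_loc_of_deriv_le
    (F := fun r θ => gg r θ) (F' := fun r θ => gg' r θ) (a := (0:ℝ)) (b := π/2)
    (μ := MeasureTheory.volume) (x₀ := r₀)
    (bound := fun _ => 8 / Real.sqrt (1 - R ^ 2) ^ 3) (Metric.ball_mem_nhds r₀ hε) ?_ ?_ ?_ ?_ ?_ ?_
  · exact main.2
  · filter_upwards [Metric.ball_mem_nhds r₀ hε] with x hx
    exact ((cont_gg_theta (lt_trans (hball x hx) hR1)).aestronglyMeasurable).restrict
  · exact (cont_gg_theta h0).intervalIntegrable _ _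
  · exact ((cont_gg' h0).aestronglyMeasurable).restrict
  · apply MeasureTheory.ae_of_all
    intro t _ x hx
    have hxR := hball x hx
    have hx1 : |x| < 1 := lt_trans hxR hR1
    have hX := X_pos hx1 t
    have hu : 0 < Real.sqrt (1 - x ^ 2 * Real.sin t ^ 2) := Real.sqrt_pos.mpr hX
    have hS0 : 0 ≤ Real.sin t ^ 2 := sq_nonneg _
    have hS1 : Real.sin t ^ 2 ≤ 1 := Real.sin_sq_le_one t
    have hx2 : x ^ 2 < 1 := by nlinarith [sq_abs x, abs_nonneg x]
    have hden : Real.sqrt (1 - R ^ 2) ≤ Real.sqrt (1 - x ^ 2 * Real.sin t ^ 2) := by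
      apply Real.sqrt_le_sqrt
      nlinarith [sq_abs x, abs_nonneg x, abs_nonneg r₀]
    show ‖gg' x t‖ ≤ 8 / Real.sqrt (1 - R ^ 2) ^ 3
    rw [gg', Real.norm_eq_abs, abs_div, abs_of_pos (pow_pos hu 3)]
    apply div_le_div₀ (by positivity) ?_ (by positivity) (by gcongr)
    rw [abs_mul]
    have h1 : |x| ≤ 1 := hx1.le
    have h2 : |2 - 3 * Real.sin t ^ 2 - x ^ 2 * Real.sin t ^ 2 + 2 * x ^ 2 * Real.sin t ^ 4| ≤ 8 := by
      rw [abs_le]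
      constructor <;> nlinarith [sq_nonneg (Real.sin t), sq_nonneg x,
        sq_nonneg (Real.sin t ^ 2), mul_nonneg (sq_nonneg x) (sq_nonneg (Real.sin t ^ 2))]
    calc |x| * |2 - 3 * Real.sin t ^ 2 - x ^ 2 * Real.sin t ^ 2 + 2 * x ^ 2 * Real.sin t ^ 4|
        ≤ 1 * 8 := by
          apply mul_le_mul h1 h2 (abs_nonneg _) zero_le_one
      _ = 8 := by ring
  · exact intervalIntegrable_const
  · apply MeasureTheory.ae_of_all
    intro t _ x hx
    exact hasDerivAt_gg (lt_trans (hball x hx) hR1) t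

lemma meas_gg (r : ℝ) : Measurable (fun θ : ℝ => gg r θ) := by
  unfold gg
  fun_prop

lemma gg_bound {r : ℝ} (hr : r ∈ Icc (0:ℝ) 1) (θ : ℝ) : ‖gg r θ‖ ≤ 2 := by
  obtain ⟨hr0, hr1⟩ := hr
  have hr2 : r ^ 2 ≤ 1 := by nlinarith
  have hS0 : 0 ≤ Real.sin θ ^ 2 := sq_nonneg _
  have hS1 : Real.sin θ ^ 2 ≤ 1 := Real.sin_sq_le_one θ
  have hsc : Real.sin θ ^ 2 + Real.cos θ ^ 2 = 1 := Real.sin_sq_add_cos_sq θ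
  have hC0 : 0 ≤ Real.cos θ ^ 2 := sq_nonneg _
  have hX0 : 0 ≤ 1 - r ^ 2 * Real.sin θ ^ 2 := by nlinarith
  have hN0 : 0 ≤ 1 + r ^ 2 - 2 * r ^ 2 * Real.sin θ ^ 2 := by nlinarith
  have hu0 : 0 ≤ Real.sqrt (1 - r ^ 2 * Real.sin θ ^ 2) := Real.sqrt_nonneg _
  rw [gg, Real.norm_eq_abs, abs_of_nonneg (div_nonneg hN0 hu0)]
  rcases eq_or_lt_of_le hu0 with h | hu
  · rw [← h, div_zero]; norm_num
  · rw [div_le_iff₀ hu]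
    have h2 : Real.sqrt (1 - r ^ 2 * Real.sin θ ^ 2) ^ 2 = 1 - r ^ 2 * Real.sin θ ^ 2 :=
      Real.sq_sqrt hX0
    have hu1 : Real.sqrt (1 - r ^ 2 * Real.sin θ ^ 2) ≤ 1 :=
      Real.sqrt_le_one.mpr (by nlinarith)
    have hCu : Real.cos θ ^ 2 ≤ Real.sqrt (1 - r ^ 2 * Real.sin θ ^ 2) := by
      rw [Real.le_sqrt hC0 hX0]
      nlinarith
    nlinarith
  
lemma contOn_GG : ContinuousOn GG (Icc 0 1) := by
  intro r₀ hr₀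
  have hae : ∀ᵐ θ : ℝ ∂MeasureTheory.volume, θ ∈ Set.uIoc (0:ℝ) (π/2) → Real.sin θ ^ 2 < 1 := by
    have h2 : ∀ᵐ θ : ℝ ∂MeasureTheory.volume, θ ≠ π/2 := by
      rw [MeasureTheory.ae_iff]
      simp only [not_not, Set.setOf_eq_eq_singleton]
      exact Real.volume_singleton
    filter_upwards [h2] with θ hne hmem
    rw [Set.uIoc_of_le (by positivity)] at hmem
    have hlt : θ < π / 2 := lt_of_le_of_ne hmem.2 hne
    have hcos : 0 < Real.cos θ := Real.cos_pos_of_mem_Ioo ⟨by linarith [hmem.1, Real.pi_pos], hlt⟩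
    nlinarith [Real.sin_sq_add_cos_sq θ]
  apply intervalIntegral.tendsto_integral_filter_of_dominated_convergence (bound := fun _ => 2)
  · exact Filter.Eventually.of_forall fun r => ((meas_gg r).aestronglyMeasurable).restrict
  · filter_upwards [self_mem_nhdsWithin] with r hr
    exact MeasureTheory.ae_of_all _ fun θ _ => gg_bound hr θ
  · exact intervalIntegrable_const
  · filter_upwards [hae] with θ hθ'
    intro hmem
    have hθ := hθ' hmem
    have hr2 : r₀ ^ 2 ≤ 1 := by nlinarith [hr₀.1, hr₀.2]
    have hX : 0 < 1 - r₀ ^ 2 * Real.sin θ ^ 2 := by nlinarith [sq_nonneg r₀, sq_nonneg (Real.sin θ)]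
    have hca : ContinuousAt (fun r : ℝ => gg r θ) r₀ := by
      unfold gg
      apply ContinuousAt.div (by fun_prop) (by fun_prop)
      exact ne_of_gt (Real.sqrt_pos.mpr hX)
    exact hca.tendsto.mono_left nhdsWithin_le_nhds

lemma GG_zero : GG 0 = π / 2 := by
  unfold GG gg
  simp

lemma GG_one : GG 1 = 2 := by
  unfold GG
  rw [show (∫ θ in (0:ℝ)..(π/2), gg 1 θ) = ∫ θ in (0:ℝ)..(π/2), 2 * Real.cos θ from
    intervalIntegral.integral_congr ?_]
  · rw [intervalIntegral.integral_const_mul, integral_cos]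
    simp
  · intro θ hθ
    rw [Set.uIcc_of_le (by positivity)] at hθ
    have hcos : 0 ≤ Real.cos θ := Real.cos_nonneg_of_mem_Icc
      ⟨by linarith [hθ.1, Real.pi_pos], hθ.2⟩
    have h1 : (1:ℝ) - 1 ^ 2 * Real.sin θ ^ 2 = Real.cos θ ^ 2 := by
      rw [one_pow, one_mul, ← Real.cos_sq']
    rw [gg, h1, Real.sqrt_sq hcos]
    rcases eq_or_lt_of_le hcos with h | h
    · rw [← h]
      simp [← Real.cos_sq']
      linarith [Real.sin_sq_add_cos_sq θ, sq_nonneg (Real.cos θ), h]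
    · rw [div_eq_iff (ne_of_gt h)]
      show _ = 2 * Real.cos θ * Real.cos θ
      nlinarith [Real.sin_sq_add_cos_sq θ]

lemma f_eq_GG {r : ℝ} (hr : |r| < 1) : 2 * ellE r - (1 - r ^ 2) * ellK r = GG r := by
  have hcu : Continuous fun θ : ℝ => Real.sqrt (1 - r ^ 2 * Real.sin θ ^ 2) := cont_u
  have hc2 : Continuous fun θ : ℝ => 1 / Real.sqrt (1 - r ^ 2 * Real.sin θ ^ 2) :=
    Continuous.div continuous_const cont_u fun θ => ne_of_gt (Real.sqrt_pos.mpr (X_pos hr θ))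
  unfold ellE ellK GG
  rw [← intervalIntegral.integral_const_mul, ← intervalIntegral.integral_const_mul,
    ← intervalIntegral.integral_sub ((continuous_const.fun_mul hcu).intervalIntegrable _ _)
      ((continuous_const.fun_mul hc2).intervalIntegrable _ _)]
  apply intervalIntegral.integral_congr
  intro θ _
  have hX := X_pos hr θ
  have hu : 0 < Real.sqrt (1 - r ^ 2 * Real.sin θ ^ 2) := Real.sqrt_pos.mpr hX
  have h2 : Real.sqrt (1 - r ^ 2 * Real.sin θ ^ 2) ^ 2 = 1 - r ^ 2 * Real.sin θ ^ 2 :=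
    Real.sq_sqrt hX.le
  rw [gg]
  field_simp
  linear_combination 2 * h2

lemma abs_lt_one_of_Ioo {r : ℝ} (hr : r ∈ Ioo (0:ℝ) 1) : |r| < 1 :=
  abs_lt.mpr ⟨by linarith [hr.1], hr.2⟩

/-- `r ↦ 2E(r) − (1−r²)K(r)` is strictly increasing from `(0,1)` onto `(π/2, 2)`. -/
theorem strictMonoOn_two_ellE_sub :
    StrictMonoOn (fun r : ℝ => 2 * ellE r - (1 - r ^ 2) * ellK r) (Ioo 0 1) ∧
    Tendsto (fun r : ℝ => 2 * ellE r - (1 - r ^ 2) * ellK r) (𝓝[>] 0) (𝓝 (π / 2)) ∧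
    Tendsto (fun r : ℝ => 2 * ellE r - (1 - r ^ 2) * ellK r) (𝓝[<] 1) (𝓝 2) ∧
    (fun r : ℝ => 2 * ellE r - (1 - r ^ 2) * ellK r) '' Ioo 0 1 = Ioo (π / 2) 2 := by
  set f : ℝ → ℝ := fun r => 2 * ellE r - (1 - r ^ 2) * ellK r with hf
  have hfeq : EqOn f GG (Ioo 0 1) := fun r hr => f_eq_GG (abs_lt_one_of_Ioo hr)
  have hmono : StrictMonoOn GG (Icc 0 1) := by
    apply strictMonoOn_of_deriv_pos (convex_Icc 0 1) contOn_GG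
    intro x hx
    rw [interior_Icc] at hx
    have hx1 : |x| < 1 := abs_lt_one_of_Ioo hx
    rw [(hasDerivAt_GG hx1).deriv, integral_gg'_eq hx1]
    exact mul_pos hx.1 (integral_cdivu_pos hx1)
  have hmonof : StrictMonoOn f (Ioo 0 1) := by
    intro a ha b hb hab
    rw [hfeq ha, hfeq hb]
    exact hmono (Ioo_subset_Icc_self ha) (Ioo_subset_Icc_self hb) hab
  have h0mem : (0:ℝ) ∈ Icc (0:ℝ) 1 := ⟨le_refl 0, zero_le_one⟩
  have h1mem : (1:ℝ) ∈ Icc (0:ℝ) 1 := ⟨zero_le_one, le_refl 1⟩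
  have htend0 : Tendsto f (𝓝[>] 0) (𝓝 (π / 2)) := by
    have h0 : Tendsto GG (𝓝[Ioo (0:ℝ) 1] 0) (𝓝 (π / 2)) := by
      have := (contOn_GG 0 h0mem).tendsto
      rw [GG_zero] at this
      exact this.mono_left (nhdsWithin_mono _ Ioo_subset_Icc_self)
    rw [← nhdsWithin_Ioo_eq_nhdsGT (zero_lt_one (α := ℝ))]
    apply Tendsto.congr' _ h0
    filter_upwards [self_mem_nhdsWithin] with r hr
    exact (hfeq hr).symm
  have htend1 : Tendsto f (𝓝[<] 1) (𝓝 2) := by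
    have h1 : Tendsto GG (𝓝[Ioo (0:ℝ) 1] 1) (𝓝 2) := by
      have := (contOn_GG 1 h1mem).tendsto
      rw [GG_one] at this
      exact this.mono_left (nhdsWithin_mono _ Ioo_subset_Icc_self)
    rw [← nhdsWithin_Ioo_eq_nhdsLT (zero_lt_one (α := ℝ))]
    apply Tendsto.congr' _ h1
    filter_upwards [self_mem_nhdsWithin] with r hr
    exact (hfeq hr).symm
  have himg : f '' Ioo 0 1 = Ioo (π / 2) 2 := by
    rw [image_congr hfeq]
    apply Subset.antisymm
    · rintro _ ⟨x, hx, rfl⟩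
      constructor
      · rw [← GG_zero]
        exact hmono h0mem (Ioo_subset_Icc_self hx) hx.1
      · rw [← GG_one]
        exact hmono (Ioo_subset_Icc_self hx) h1mem hx.2
    · have := intermediate_value_Ioo zero_le_one contOn_GG
      rw [GG_zero, GG_one] at this
      exact this
  exact ⟨hmonof, htend0, htend1, himg⟩
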